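/- For all graphs G1, G2 and every positive integer k, α_k(G1 × G2) ≥ α_k(G1) · α_k(G2). -/

import Mathlib

open SimpleGraph

/-- The `k`-independence number: the maximum size of a set of vertices at pairwise
distance greater than `k`. -/
noncomputable def kIndepNum {V : Type*} [Fintype V] (G : SimpleGraph V) (k : ℕ) : ℕ :=
  sSup {n | ∃ s : Finset V, s.card = n ∧ ∀ u ∈ s, ∀ v ∈ s, u ≠ v → (k : ℕ∞) < G.edist u v}

/-- The tensor (direct / categorical) product of two simple graphs. -/
def tensorProd {V1 V2 : Type*} (G1 : SimpleGraph V1) (G2 : SimpleGraph V2) :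
    SimpleGraph (V1 × V2) where
  Adj a b := G1.Adj a.1 b.1 ∧ G2.Adj a.2 b.2
  symm := by constructor; intro a b ⟨h1, h2⟩; exact ⟨G1.adj_symm h1, G2.adj_symm h2⟩
  loopless := by constructor; intro a ⟨h1, _⟩; exact G1.irrefl h1

lemma edist_fst_le_tensor {V1 V2 : Type*} (G1 : SimpleGraph V1) (G2 : SimpleGraph V2)
    (a b : V1 × V2) : G1.edist a.1 b.1 ≤ (tensorProd G1 G2).edist a b := by
  by_cases h : (tensorProd G1 G2).edist a b = ⊤
  · simp [h]
  · obtain ⟨p, hp⟩ := exists_walk_of_edist_ne_top h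
    let f : tensorProd G1 G2 →g G1 := ⟨Prod.fst, fun h => h.1⟩
    have := edist_le (p.map f)
    rwa [Walk.length_map, hp] at this

lemma edist_snd_le_tensor {V1 V2 : Type*} (G1 : SimpleGraph V1) (G2 : SimpleGraph V2)
    (a b : V1 × V2) : G2.edist a.2 b.2 ≤ (tensorProd G1 G2).edist a b := by
  by_cases h : (tensorProd G1 G2).edist a b = ⊤
  · simp [h]
  · obtain ⟨p, hp⟩ := exists_walk_of_edist_ne_top h
    let f : tensorProd G1 G2 →g G2 := ⟨Prod.snd, fun h => h.2⟩
    have := edist_le (p.map f)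
    rwa [Walk.length_map, hp] at this

lemma kIndep_bdd {V : Type*} [Fintype V] (G : SimpleGraph V) (k : ℕ) :
    BddAbove {n | ∃ s : Finset V, s.card = n ∧
      ∀ u ∈ s, ∀ v ∈ s, u ≠ v → (k : ℕ∞) < G.edist u v} := by
  refine ⟨Fintype.card V, fun n hn => ?_⟩
  obtain ⟨s, hs, -⟩ := hn
  exact hs ▸ s.card_le_univ

lemma kIndep_mem {V : Type*} [Fintype V] (G : SimpleGraph V) (k : ℕ) :
    kIndepNum G k ∈ {n | ∃ s : Finset V, s.card = n ∧
      ∀ u ∈ s, ∀ v ∈ s, u ≠ v → (k : ℕ∞) < G.edist u v} := by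
  refine Nat.sSup_mem ?_ (kIndep_bdd G k)
  exact ⟨0, ∅, by simp, by simp⟩

theorem kIndepNum_tensorProd_ge {V1 V2 : Type*} [Fintype V1] [Fintype V2]
    (G1 : SimpleGraph V1) (G2 : SimpleGraph V2) (k : ℕ) (hk : 0 < k) :
    kIndepNum (tensorProd G1 G2) k ≥ kIndepNum G1 k * kIndepNum G2 k := by
  obtain ⟨s1, hs1, h1⟩ := kIndep_mem G1 k
  obtain ⟨s2, hs2, h2⟩ := kIndep_mem G2 k
  have hmem : kIndepNum G1 k * kIndepNum G2 k ∈ {n | ∃ s : Finset (V1 × V2), s.card = n ∧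
      ∀ u ∈ s, ∀ v ∈ s, u ≠ v → (k : ℕ∞) < (tensorProd G1 G2).edist u v} := by
    refine ⟨s1 ×ˢ s2, by rw [Finset.card_product, hs1, hs2], ?_⟩
    intro u hu v hv huv
    rw [Finset.mem_product] at hu hv
    rcases eq_or_ne u.1 v.1 with h | h
    · have h2' : u.2 ≠ v.2 := fun h' => huv (Prod.ext h h')
      exact lt_of_lt_of_le (h2 u.2 hu.2 v.2 hv.2 h2') (edist_snd_le_tensor G1 G2 u v)
    · exact lt_of_lt_of_le (h1 u.1 hu.1 v.1 hv.1 h) (edist_fst_le_tensor G1 G2 u v)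
  exact le_csSup (kIndep_bdd (tensorProd G1 G2) k) hmem
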